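/- Let C be an HFP code of length 4t such that (C,*) is the internal direct product ⟨a⟩ × ⟨u⟩ with a of *-order 4t (an HFP(4t,2_u)-code, i.e., a circulant Hadamard code), and suppose dim K(C) = 1. Then there exists an HFP(4t,4_u)-code Ĉ of length 8t — that is, an HFP code of length 8t such that (Ĉ,*) is an abelian group of order 16t which is the internal direct product ⟨â⟩ × ⟨b̂⟩ with â of order 4t, b̂ of order 4 and b̂^2 equal to the all-one vector of length 8t — whose kernel is exactly K(Ĉ) = {e, u, (e_{4t},u_{4t}), (u_{4t},e_{4t})}. -/

import Mathlib

open Finset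

abbrev Vec (n : ℕ) := Fin n → ZMod 2

def allOne (n : ℕ) : Vec n := fun _ => 1

def permAct {n : ℕ} (σ : Equiv.Perm (Fin n)) (x : Vec n) : Vec n := fun i => x (σ⁻¹ i)

/-- An Hadamard full propelinear code of length `n`:
an Hadamard code together with a full propelinear structure. -/
structure HFPCode (n : ℕ) where
  C : Set (Vec n)
  π : Vec n → Equiv.Perm (Fin n)
  zero_mem : (0 : Vec n) ∈ C
  card_eq : C.ncard = 2 * n
  allOne_mem : allOne n ∈ C
  add_allOne_mem : ∀ x ∈ C, x + allOne n ∈ C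
  dist_eq : ∀ x ∈ C, ∀ y ∈ C, x ≠ y → y ≠ x + allOne n → 2 * hammingDist x y = n
  mul_mem : ∀ x ∈ C, ∀ y ∈ C, x + permAct (π x) y ∈ C
  π_mul : ∀ x ∈ C, ∀ y ∈ C, π (x + permAct (π x) y) = π x * π y
  π_zero : π 0 = 1
  π_allOne : π (allOne n) = 1
  π_fixedfree : ∀ x ∈ C, x ≠ 0 → x ≠ allOne n → ∀ i, π x i ≠ i

namespace HFPCode

variable {n : ℕ} (H : HFPCode n)

/-- The propelinear group operation `x * y = x + π_x(y)`. -/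
def mul (x y : Vec n) : Vec n := x + permAct (H.π x) y

/-- `*`-powers: `x^0 = e`, `x^(i+1) = x * x^i`. -/
def pow (x : Vec n) : ℕ → Vec n
  | 0 => 0
  | i + 1 => H.mul x (pow x i)

end HFPCode

/-- The kernel `K(C) = {z : z + C = C}`. -/
def kerSet {n : ℕ} (C : Set (Vec n)) : Set (Vec n) := {z | (fun x => z + x) '' C = C}

/-- Dimension of the kernel of a code. -/
noncomputable def kerDim {n : ℕ} (C : Set (Vec n)) : ℕ :=
  Module.finrank (ZMod 2) (Submodule.span (ZMod 2) (kerSet C))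

/-- The rank of a code: dimension of its linear span. -/
noncomputable def rankOf {n : ℕ} (C : Set (Vec n)) : ℕ :=
  Module.finrank (ZMod 2) (Submodule.span (ZMod 2) C)

namespace HFPCode

/-- `C` is an `HFP(4t_u,2)`-code with generators `a`, `b`: `(C,*)` is an abelian group
of order `8t` generated by `a` of order `4t` with `a^{2t} = u` and `b` of order `2`
with `b ∉ ⟨a⟩`, so `(C,*) ≅ C_{4t} × C_2`. -/
def Is4tu2 (t : ℕ) (H : HFPCode (4 * t)) (a b : Vec (4 * t)) : Prop :=
  a ∈ H.C ∧ b ∈ H.C ∧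
  (∀ x ∈ H.C, ∀ y ∈ H.C, H.mul x y = H.mul y x) ∧
  H.pow a (4 * t) = 0 ∧ (∀ j : ℕ, 0 < j → j < 4 * t → H.pow a j ≠ 0) ∧
  H.pow a (2 * t) = allOne (4 * t) ∧
  H.pow b 2 = 0 ∧ b ≠ 0 ∧
  (∀ i : ℕ, b ≠ H.pow a i) ∧
  (∀ x ∈ H.C, ∃ i j : ℕ, x = H.mul (H.pow a i) (H.pow b j))

/-- `C` is an `HFP(2t,2,2_u)`-code with generators `a`, `b` (and `u`): `(C,*)` is an
abelian group of order `8t` which is the internal direct product `⟨a⟩ × ⟨b⟩ × ⟨u⟩`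
with `a` of order `2t` and `b` of order `2`, so `(C,*) ≅ C_{2t} × C_2 × C_2`. -/
def Is2t22u (t : ℕ) (H : HFPCode (4 * t)) (a b : Vec (4 * t)) : Prop :=
  a ∈ H.C ∧ b ∈ H.C ∧
  (∀ x ∈ H.C, ∀ y ∈ H.C, H.mul x y = H.mul y x) ∧
  H.pow a (2 * t) = 0 ∧ (∀ j : ℕ, 0 < j → j < 2 * t → H.pow a j ≠ 0) ∧
  H.pow b 2 = 0 ∧ b ≠ 0 ∧ allOne (4 * t) ≠ 0 ∧
  (∀ i j k : ℕ, i < 2 * t → j < 2 → k < 2 →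
    H.mul (H.mul (H.pow a i) (H.pow b j)) (H.pow (allOne (4 * t)) k) = 0 →
      i = 0 ∧ j = 0 ∧ k = 0) ∧
  (∀ x ∈ H.C, ∃ i j k : ℕ,
    x = H.mul (H.mul (H.pow a i) (H.pow b j)) (H.pow (allOne (4 * t)) k))

/-- `C` is an `HFP(2t,4_u)`-code with generators `a`, `b`: `(C,*)` is an abelian group
of order `8t` which is the internal direct product `⟨a⟩ × ⟨b⟩` with `a` of order `2t`,
`b` of order `4` and `b² = u`, so `(C,*) ≅ C_{2t} × C_4`. -/
def Is2t4u (t : ℕ) (H : HFPCode (4 * t)) (a b : Vec (4 * t)) : Prop :=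
  a ∈ H.C ∧ b ∈ H.C ∧
  (∀ x ∈ H.C, ∀ y ∈ H.C, H.mul x y = H.mul y x) ∧
  H.pow a (2 * t) = 0 ∧ (∀ j : ℕ, 0 < j → j < 2 * t → H.pow a j ≠ 0) ∧
  H.pow b 4 = 0 ∧ (∀ j : ℕ, 0 < j → j < 4 → H.pow b j ≠ 0) ∧
  H.pow b 2 = allOne (4 * t) ∧
  (∀ i j : ℕ, i < 2 * t → j < 4 → H.mul (H.pow a i) (H.pow b j) = 0 → i = 0 ∧ j = 0) ∧
  (∀ x ∈ H.C, ∃ i j : ℕ, x = H.mul (H.pow a i) (H.pow b j))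

/-- The permutation associated to `a` is normalized to
`(1,2,…,2t)(2t+1,…,4t)` (0-indexed here). -/
def NormPiA (t : ℕ) (H : HFPCode (4 * t)) (a : Vec (4 * t)) : Prop :=
  ∀ i : Fin (4 * t), ((H.π a) i).val =
    if i.val < 2 * t then (i.val + 1) % (2 * t) else 2 * t + (i.val + 1) % (2 * t)

/-- The permutation associated to `b` is normalized to
`(1,2t+1)(2,2t+2)⋯(2t,4t)` (0-indexed here). -/
def NormPiB (t : ℕ) (H : HFPCode (4 * t)) (b : Vec (4 * t)) : Prop :=
  ∀ i : Fin (4 * t), ((H.π b) i).val = (i.val + 2 * t) % (4 * t)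

end HFPCode

/-- The vector `(e_{2t}, u_{2t})`: `0` on the first half, `1` on the second half. -/
def euVec (t : ℕ) : Vec (4 * t) := fun i => if i.val < 2 * t then 0 else 1

/-- The vector `ω_{4t} = (1,0,1,0,…,1,0)`. -/
def omegaVec (t : ℕ) : Vec (4 * t) := fun i => if i.val % 2 = 0 then 1 else 0

/-- The vector `(ω_{2t}, ω_{2t} + u_{2t})`. -/
def omegaCompVec (t : ℕ) : Vec (4 * t) := fun i =>
  if i.val < 2 * t then (if i.val % 2 = 0 then 1 else 0)
  else (if i.val % 2 = 0 then 0 else 1)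

/-- `C` is linear if it is an `F₂`-subspace, i.e. coincides with its linear span. -/
def IsLinearCode {n : ℕ} (C : Set (Vec n)) : Prop :=
  C = (Submodule.span (ZMod 2) C : Set (Vec n))

/-- The vector `(e_{4t}, u_{4t})` of length `8t`. -/
def euVec8 (t : ℕ) : Vec (8 * t) := fun i => if i.val < 4 * t then 0 else 1

/-- The vector `(u_{4t}, e_{4t})` of length `8t`. -/
def ueVec8 (t : ℕ) : Vec (8 * t) := fun i => if i.val < 4 * t then 1 else 0


open Finset


namespace Doubling

def Emb (t : ℕ) : (Fin (4*t) ⊕ Fin (4*t)) ≃ Fin (8*t) :=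
  finSumFinEquiv.trans (finCongr (by ring))

def G (t : ℕ) (x y : Vec (4*t)) : Vec (8*t) := fun i => Sum.elim x y ((Emb t).symm i)

variable {t : ℕ}

@[simp] lemma G_apply_inl (x y : Vec (4*t)) (j) : G t x y (Emb t (Sum.inl j)) = x j := by
  simp [G]

@[simp] lemma G_apply_inr (x y : Vec (4*t)) (j) : G t x y (Emb t (Sum.inr j)) = y j := by
  simp [G]

lemma G_inj {x y x' y' : Vec (4*t)} (h : G t x y = G t x' y') : x = x' ∧ y = y' := by
  constructor
  · funext j; have := congrFun h (Emb t (Sum.inl j)); simpa using this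
  · funext j; have := congrFun h (Emb t (Sum.inr j)); simpa using this

lemma G_add (x y x' y' : Vec (4*t)) : G t x y + G t x' y' = G t (x + x') (y + y') := by
  funext i
  obtain ⟨s, rfl⟩ := (Emb t).surjective i
  cases s <;> simp [G]

@[simp] lemma G_zero : G t 0 0 = 0 := by
  funext i; obtain ⟨s, rfl⟩ := (Emb t).surjective i; cases s <;> simp [G]

@[simp] lemma G_allOne : G t (allOne (4*t)) (allOne (4*t)) = allOne (8*t) := by
  funext i; obtain ⟨s, rfl⟩ := (Emb t).surjective i; cases s <;> simp [G, allOne]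

def Dg (t : ℕ) (σ : Equiv.Perm (Fin (4*t))) : Equiv.Perm (Fin (8*t)) :=
  (Emb t).symm.trans ((Equiv.sumCongr σ σ).trans (Emb t))

def Sw (t : ℕ) : Equiv.Perm (Fin (8*t)) :=
  (Emb t).symm.trans ((Equiv.sumComm _ _).trans (Emb t))

@[simp] lemma Dg_apply_inl (σ) (j : Fin (4*t)) : Dg t σ (Emb t (Sum.inl j)) = Emb t (Sum.inl (σ j)) := by
  simp [Dg]
@[simp] lemma Dg_apply_inr (σ) (j : Fin (4*t)) : Dg t σ (Emb t (Sum.inr j)) = Emb t (Sum.inr (σ j)) := by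
  simp [Dg]
@[simp] lemma Sw_apply_inl (j : Fin (4*t)) : Sw t (Emb t (Sum.inl j)) = Emb t (Sum.inr j) := by
  simp [Sw]
@[simp] lemma Sw_apply_inr (j : Fin (4*t)) : Sw t (Emb t (Sum.inr j)) = Emb t (Sum.inl j) := by
  simp [Sw]

@[simp] lemma Dg_inv (σ : Equiv.Perm (Fin (4*t))) : (Dg t σ)⁻¹ = Dg t σ⁻¹ := by
  apply Equiv.ext; intro i
  obtain ⟨s, rfl⟩ := (Dg t σ).surjective i
  rw [Equiv.Perm.inv_def, Equiv.symm_apply_apply]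
  obtain ⟨s', rfl⟩ := (Emb t).surjective s
  cases s' <;> simp

@[simp] lemma Sw_inv : (Sw t)⁻¹ = Sw t := by
  apply Equiv.ext; intro i
  obtain ⟨s, rfl⟩ := (Emb t).surjective i
  cases s <;> rw [Equiv.Perm.inv_def] <;> simp [Sw]

@[simp] lemma Dg_one : Dg t 1 = 1 := by
  apply Equiv.ext; intro i
  obtain ⟨s, rfl⟩ := (Emb t).surjective i
  cases s <;> simp

lemma Dg_mul (σ τ : Equiv.Perm (Fin (4*t))) : Dg t (σ * τ) = Dg t σ * Dg t τ := by
  apply Equiv.ext; intro i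
  obtain ⟨s, rfl⟩ := (Emb t).surjective i
  cases s <;> simp [Equiv.Perm.mul_apply]

lemma Sw_mul_Sw : Sw t * Sw t = 1 := by
  apply Equiv.ext; intro i
  obtain ⟨s, rfl⟩ := (Emb t).surjective i
  cases s <;> simp [Equiv.Perm.mul_apply]

lemma Dg_Sw_comm (σ : Equiv.Perm (Fin (4*t))) : Dg t σ * Sw t = Sw t * Dg t σ := by
  apply Equiv.ext; intro i
  obtain ⟨s, rfl⟩ := (Emb t).surjective i
  cases s <;> simp [Equiv.Perm.mul_apply]

lemma permAct_mul {n : ℕ} (p q : Equiv.Perm (Fin n)) (z : Vec n) :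
    permAct (p * q) z = permAct p (permAct q z) := by
  funext i; simp [permAct, mul_inv_rev, Equiv.Perm.mul_apply]

@[simp] lemma permAct_add {n : ℕ} (σ : Equiv.Perm (Fin n)) (x y : Vec n) :
    permAct σ (x + y) = permAct σ x + permAct σ y := rfl

@[simp] lemma permAct_zero {n : ℕ} (σ : Equiv.Perm (Fin n)) : permAct σ (0 : Vec n) = 0 := rfl

@[simp] lemma permAct_allOne {n : ℕ} (σ : Equiv.Perm (Fin n)) : permAct σ (allOne n) = allOne n := rfl

@[simp] lemma permAct_one {n : ℕ} (z : Vec n) : permAct (1 : Equiv.Perm (Fin n)) z = z := rfl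

lemma permAct_Dg (σ) (x y : Vec (4*t)) :
    permAct (Dg t σ) (G t x y) = G t (permAct σ x) (permAct σ y) := by
  funext i
  obtain ⟨s, rfl⟩ := (Emb t).surjective i
  cases s <;> simp [permAct]

lemma permAct_Sw (x y : Vec (4*t)) : permAct (Sw t) (G t x y) = G t y x := by
  funext i
  obtain ⟨s, rfl⟩ := (Emb t).surjective i
  cases s <;> simp [permAct]

lemma hamming_G (x y x' y' : Vec (4*t)) :
    hammingDist (G t x y) (G t x' y') = hammingDist x x' + hammingDist y y' := by
  classical
  simp only [hammingDist]
  rw [Finset.card_filter, Finset.card_filter, Finset.card_filter]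
  rw [← Equiv.sum_comp (Emb t) (fun i => if G t x y i ≠ G t x' y' i then 1 else 0)]
  rw [Fintype.sum_sum_type]
  congr 1 <;> apply Finset.sum_congr rfl <;> intro j _ <;> simp



lemma zmod2_cases (a : ZMod 2) : a = 0 ∨ a = 1 := by revert a; decide

lemma vec_add_self {n : ℕ} (x : Vec n) : x + x = 0 := by
  funext i
  have : ∀ a : ZMod 2, a + a = 0 := by decide
  exact this (x i)

lemma vec_add_add_cancel {n : ℕ} (x y : Vec n) : x + y + y = x := by
  rw [add_assoc, vec_add_self, add_zero]

lemma allOne_ne_zero {n : ℕ} (hn : 0 < n) : allOne n ≠ 0 := by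
  intro h
  have := congrFun h ⟨0, hn⟩
  simp [allOne] at this

lemma add_allOne_ne {n : ℕ} (hn : 0 < n) (x : Vec n) : x + allOne n ≠ x := by
  intro h
  have : allOne n = 0 := by
    have := congrArg (fun z => z + x) h
    simpa [add_comm, vec_add_add_cancel] using congrArg (fun z => x + z - x) h
  exact allOne_ne_zero hn this

lemma hammingDist_self_add_allOne {n : ℕ} (x : Vec n) :
    hammingDist x (x + allOne n) = n := by
  classical
  simp only [hammingDist]
  have : (Finset.univ.filter fun i => x i ≠ (x + allOne n) i) = Finset.univ := by
    apply Finset.filter_true_of_mem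
    intro i _
    have : ∀ a : ZMod 2, a ≠ a + 1 := by decide
    exact this (x i)
  rw [this, Finset.card_univ, Fintype.card_fin]

lemma hammingDist_add_compl {n : ℕ} (x y : Vec n) :
    hammingDist x y + hammingDist x (y + allOne n) = n := by
  classical
  simp only [hammingDist]
  have h2 : (Finset.univ.filter fun i => x i ≠ (y + allOne n) i)
      = Finset.univ.filter fun i => ¬ (x i ≠ y i) := by
    apply Finset.filter_congr
    intro i _
    have : ∀ a b : ZMod 2, (a ≠ b + 1 ↔ ¬ a ≠ b) := by decide
    exact this (x i) (y i)
  rw [h2, Finset.card_filter_add_card_filter_not]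
  simp

lemma hammingDist_add_right {n : ℕ} (x y z : Vec n) :
    hammingDist (x + z) (y + z) = hammingDist x y := by
  classical
  simp only [hammingDist]
  congr 1
  apply Finset.filter_congr
  intro i _
  constructor
  · intro h h'; exact h (by simp [Pi.add_apply, h'])
  · intro h h'; exact h (by
      have := congrArg (fun a => a - z i) h'
      simpa using this)

section Construction

variable {t : ℕ}

def DC (t : ℕ) (H : HFPCode (4*t)) : Set (Vec (8*t)) :=
  (fun x => G t x x) '' H.C ∪ (fun x => G t x (x + allOne (4*t))) '' H.C

open scoped Classical in
noncomputable def DPi (t : ℕ) (H : HFPCode (4*t)) : Vec (8*t) → Equiv.Perm (Fin (8*t)) :=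
  fun z =>
    if (fun j => z (Emb t (Sum.inr j))) = (fun j => z (Emb t (Sum.inl j))) then
      Dg t (H.π (fun j => z (Emb t (Sum.inl j))))
    else if (fun j => z (Emb t (Sum.inr j))) = (fun j => z (Emb t (Sum.inl j))) + allOne (4*t) then
      Dg t (H.π (fun j => z (Emb t (Sum.inl j)))) * Sw t
    else 1

lemma extractL (x y : Vec (4*t)) : (fun j => G t x y (Emb t (Sum.inl j))) = x := by
  funext j; simp

lemma extractR (x y : Vec (4*t)) : (fun j => G t x y (Emb t (Sum.inr j))) = y := by
  funext j; simp

lemma DPi_even (H : HFPCode (4*t)) (x : Vec (4*t)) :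
    DPi t H (G t x x) = Dg t (H.π x) := by
  rw [DPi, extractL, extractR, if_pos rfl]

lemma DPi_odd (ht : 0 < t) (H : HFPCode (4*t)) (x : Vec (4*t)) :
    DPi t H (G t x (x + allOne (4*t))) = Dg t (H.π x) * Sw t := by
  rw [DPi, extractL, extractR, if_neg (add_allOne_ne (by omega) x), if_pos rfl]

lemma mul_ee (H : HFPCode (4*t)) (x y : Vec (4*t)) :
    G t x x + permAct (DPi t H (G t x x)) (G t y y) = G t (H.mul x y) (H.mul x y) := by
  rw [DPi_even, permAct_Dg, G_add]; rfl

lemma mul_eo (H : HFPCode (4*t)) (x y : Vec (4*t)) :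
    G t x x + permAct (DPi t H (G t x x)) (G t y (y + allOne (4*t)))
      = G t (H.mul x y) (H.mul x y + allOne (4*t)) := by
  rw [DPi_even, permAct_Dg, permAct_add, permAct_allOne, G_add]
  show G t (H.mul x y) _ = _
  rw [← add_assoc]; rfl

lemma mul_oe (ht : 0 < t) (H : HFPCode (4*t)) (x y : Vec (4*t)) :
    G t x (x + allOne (4*t)) + permAct (DPi t H (G t x (x + allOne (4*t)))) (G t y y)
      = G t (H.mul x y) (H.mul x y + allOne (4*t)) := by
  rw [DPi_odd ht, permAct_mul, permAct_Sw, permAct_Dg, G_add]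
  have e2 : x + allOne (4*t) + permAct (H.π x) y = H.mul x y + allOne (4*t) := by
    rw [HFPCode.mul]; abel
  rw [e2]
  exact rfl

lemma mul_oo (ht : 0 < t) (H : HFPCode (4*t)) (x y : Vec (4*t)) :
    G t x (x + allOne (4*t)) + permAct (DPi t H (G t x (x + allOne (4*t)))) (G t y (y + allOne (4*t)))
      = G t (H.mul x y + allOne (4*t)) (H.mul x y + allOne (4*t)) := by
  rw [DPi_odd ht, permAct_mul, permAct_Sw, permAct_Dg, permAct_add, permAct_allOne, G_add]
  have e1 : x + (permAct (H.π x) y + allOne (4*t)) = H.mul x y + allOne (4*t) := by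
    rw [HFPCode.mul]; abel
  have e2 : x + allOne (4*t) + permAct (H.π x) y = H.mul x y + allOne (4*t) := by
    rw [HFPCode.mul]; abel
  rw [e1, e2]

lemma Hpi_mul (H : HFPCode (4*t)) {x y : Vec (4*t)} (hx : x ∈ H.C) (hy : y ∈ H.C) :
    H.π (H.mul x y) = H.π x * H.π y := H.π_mul x hx y hy

lemma Hpi_add_allOne (H : HFPCode (4*t)) {m : Vec (4*t)} (hm : m ∈ H.C) :
    H.π (m + allOne (4*t)) = H.π m := by
  have := H.π_mul m hm (allOne (4*t)) H.allOne_mem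
  rw [permAct_allOne, H.π_allOne, mul_one] at this
  exact this

noncomputable def DH (t : ℕ) (ht : 0 < t) (H : HFPCode (4*t)) : HFPCode (8*t) where
  C := DC t H
  π := DPi t H
  zero_mem := Or.inl ⟨0, H.zero_mem, G_zero⟩
  card_eq := by
    have hinj1 : Set.InjOn (fun x : Vec (4*t) => G t x x) H.C := by
      intro a _ b _ h; exact (G_inj h).1
    have hinj2 : Set.InjOn (fun x : Vec (4*t) => G t x (x + allOne (4*t))) H.C := by
      intro a _ b _ h; exact (G_inj h).1
    have hdisj : Disjoint ((fun x : Vec (4*t) => G t x x) '' H.C)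
        ((fun x : Vec (4*t) => G t x (x + allOne (4*t))) '' H.C) := by
      rw [Set.disjoint_left]
      rintro z ⟨a, _, rfl⟩ ⟨b, _, hb⟩
      obtain ⟨h1, h2⟩ := G_inj hb.symm
      rw [← h1] at h2
      exact add_allOne_ne (by omega) a h2.symm
    rw [DC, Set.ncard_union_eq hdisj (Set.toFinite _) (Set.toFinite _),
      Set.ncard_image_of_injOn hinj1, Set.ncard_image_of_injOn hinj2, H.card_eq]
    ring
  allOne_mem := Or.inl ⟨allOne (4*t), H.allOne_mem, G_allOne⟩
  add_allOne_mem := by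
    rintro z (⟨x, hx, rfl⟩ | ⟨x, hx, rfl⟩)
    · refine Or.inl ⟨x + allOne (4*t), H.add_allOne_mem x hx, ?_⟩
      rw [← G_allOne, G_add]
    · refine Or.inr ⟨x + allOne (4*t), H.add_allOne_mem x hx, ?_⟩
      show G t (x + allOne (4*t)) (x + allOne (4*t) + allOne (4*t))
        = G t x (x + allOne (4*t)) + allOne (8*t)
      rw [vec_add_add_cancel, ← G_allOne, G_add, vec_add_add_cancel]
  dist_eq := by
    rintro z (⟨x, hx, rfl⟩ | ⟨x, hx, rfl⟩) w (⟨y, hy, rfl⟩ | ⟨y, hy, rfl⟩) hzw hwz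
    · have hxy : x ≠ y := fun h => hzw (by rw [h])
      have hyxu : y ≠ x + allOne (4*t) := by
        intro h
        apply hwz
        rw [h, ← G_allOne, G_add]
      have := H.dist_eq x hx y hy hxy hyxu
      rw [hamming_G]; omega
    · have := hammingDist_add_compl x y
      rw [hamming_G]; omega
    · have h1 := hammingDist_add_compl y x
      rw [hamming_G, hammingDist_comm x y, hammingDist_comm (x + allOne (4*t)) y]
      omega
    · have hxy : x ≠ y := fun h => hzw (by rw [h])
      have hyxu : y ≠ x + allOne (4*t) := by
        intro h
        apply hwz
        rw [h, ← G_allOne, G_add, vec_add_add_cancel]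
        show G t (x + allOne (4*t)) (x + allOne (4*t) + allOne (4*t)) = G t (x + allOne (4*t)) x
        rw [vec_add_add_cancel]
      have := H.dist_eq x hx y hy hxy hyxu
      rw [hamming_G]
      have heq : hammingDist (x + allOne (4*t)) (y + allOne (4*t)) = hammingDist x y :=
        hammingDist_add_right x y (allOne (4*t))
      omega
  mul_mem := by
    rintro z (⟨x, hx, rfl⟩ | ⟨x, hx, rfl⟩) w (⟨y, hy, rfl⟩ | ⟨y, hy, rfl⟩)
    · rw [mul_ee]; exact Or.inl ⟨H.mul x y, H.mul_mem x hx y hy, rfl⟩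
    · rw [mul_eo]; exact Or.inr ⟨H.mul x y, H.mul_mem x hx y hy, rfl⟩
    · rw [mul_oe ht]; exact Or.inr ⟨H.mul x y, H.mul_mem x hx y hy, rfl⟩
    · rw [mul_oo ht]
      exact Or.inl ⟨H.mul x y + allOne (4*t), H.add_allOne_mem _ (H.mul_mem x hx y hy), rfl⟩
  π_mul := by
    rintro z (⟨x, hx, rfl⟩ | ⟨x, hx, rfl⟩) w (⟨y, hy, rfl⟩ | ⟨y, hy, rfl⟩)
    · rw [mul_ee, DPi_even, DPi_even, DPi_even, Hpi_mul H hx hy, Dg_mul]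
    · rw [mul_eo, DPi_even, DPi_odd ht, DPi_odd ht, Hpi_mul H hx hy, Dg_mul, mul_assoc]
    · rw [mul_oe ht, DPi_odd ht, DPi_even, DPi_odd ht, Hpi_mul H hx hy, Dg_mul,
        mul_assoc, mul_assoc, ← Dg_Sw_comm]
    · rw [mul_oo ht, DPi_even, DPi_odd ht, DPi_odd ht,
        Hpi_add_allOne (m := H.mul x y) H (H.mul_mem x hx y hy), Hpi_mul H hx hy, Dg_mul,
        mul_assoc (Dg t (H.π x)) (Sw t), ← mul_assoc (Sw t), ← Dg_Sw_comm,
        mul_assoc (Dg t (H.π y)), Sw_mul_Sw, mul_one]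
  π_zero := by rw [← G_zero, DPi_even, H.π_zero, Dg_one]
  π_allOne := by rw [← G_allOne, DPi_even, H.π_allOne, Dg_one]
  π_fixedfree := by
    rintro z (⟨x, hx, rfl⟩ | ⟨x, hx, rfl⟩) hz0 hzu i
    · have hx0 : x ≠ 0 := fun h => hz0 (by rw [h]; exact G_zero)
      have hxu : x ≠ allOne (4*t) := fun h => hzu (by rw [h]; exact G_allOne)
      rw [DPi_even]
      obtain ⟨s, rfl⟩ := (Emb t).surjective i
      cases s with
      | inl j =>
        rw [Dg_apply_inl]
        intro h
        exact H.π_fixedfree x hx hx0 hxu j (Sum.inl.inj ((Emb t).injective h))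
      | inr j =>
        rw [Dg_apply_inr]
        intro h
        exact H.π_fixedfree x hx hx0 hxu j (Sum.inr.inj ((Emb t).injective h))
    · rw [DPi_odd ht]
      obtain ⟨s, rfl⟩ := (Emb t).surjective i
      cases s with
      | inl j =>
        rw [Equiv.Perm.mul_apply, Sw_apply_inl, Dg_apply_inr]
        intro h
        exact Sum.inr_ne_inl ((Emb t).injective h)
      | inr j =>
        rw [Equiv.Perm.mul_apply, Sw_apply_inr, Dg_apply_inl]
        intro h
        exact Sum.inl_ne_inr ((Emb t).injective h)

end Construction

section GroupFacts

variable {n : ℕ} (K : HFPCode n)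

lemma Kmul_zero (x : Vec n) : K.mul x 0 = x := by
  rw [HFPCode.mul, permAct_zero, add_zero]

lemma Kzero_mul (x : Vec n) : K.mul 0 x = x := by
  rw [HFPCode.mul, K.π_zero, permAct_one, zero_add]

lemma Kmul_allOne (x : Vec n) : K.mul x (allOne n) = x + allOne n := by
  rw [HFPCode.mul, permAct_allOne]

lemma Kpow_succ (x : Vec n) (i : ℕ) : K.pow x (i+1) = K.mul x (K.pow x i) := rfl

lemma Kpi_mul {x y : Vec n} (hx : x ∈ K.C) (hy : y ∈ K.C) :
    K.π (K.mul x y) = K.π x * K.π y := K.π_mul x hx y hy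

lemma Kmul_mem {x y : Vec n} (hx : x ∈ K.C) (hy : y ∈ K.C) : K.mul x y ∈ K.C :=
  K.mul_mem x hx y hy

lemma Kpow_mem {a : Vec n} (ha : a ∈ K.C) : ∀ i, K.pow a i ∈ K.C
  | 0 => K.zero_mem
  | (i+1) => Kmul_mem K ha (Kpow_mem ha i)

lemma Kmul_assoc {x y : Vec n} (hx : x ∈ K.C) (hy : y ∈ K.C) (z : Vec n) :
    K.mul (K.mul x y) z = K.mul x (K.mul y z) := by
  rw [HFPCode.mul, HFPCode.mul, HFPCode.mul, HFPCode.mul, K.π_mul x hx y hy, permAct_mul,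
    permAct_add, add_assoc]

lemma Kpow_add {a : Vec n} (ha : a ∈ K.C) (i j : ℕ) :
    K.pow a (i + j) = K.mul (K.pow a i) (K.pow a j) := by
  induction i with
  | zero =>
      rw [Nat.zero_add]
      show K.pow a j = K.mul 0 (K.pow a j)
      rw [Kzero_mul]
  | succ i ih =>
      have h : i + 1 + j = (i + j) + 1 := by omega
      rw [h, Kpow_succ, ih, ← Kmul_assoc K ha (Kpow_mem K ha i), ← Kpow_succ]

lemma Kpow_allOne_one : K.pow (allOne n) 1 = allOne n := by
  show K.mul (allOne n) 0 = allOne n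
  rw [Kmul_zero]

lemma Kpow_allOne (k : ℕ) : K.pow (allOne n) k = 0 ∨ K.pow (allOne n) k = allOne n := by
  induction k with
  | zero => exact Or.inl rfl
  | succ k ih =>
      rw [Kpow_succ, HFPCode.mul, K.π_allOne, permAct_one]
      rcases ih with h | h
      · rw [h, add_zero]; exact Or.inr rfl
      · rw [h, vec_add_self]; exact Or.inl rfl

lemma Kpi_add_allOne {m : Vec n} (hm : m ∈ K.C) : K.π (m + allOne n) = K.π m := by
  have := K.π_mul m hm (allOne n) K.allOne_mem
  rw [permAct_allOne, K.π_allOne, mul_one] at this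
  exact this

lemma Kcanon {a : Vec n} (ha : a ∈ K.C)
    (hgen : ∀ x ∈ K.C, ∃ i k : ℕ, x = K.mul (K.pow a i) (K.pow (allOne n) k))
    {x : Vec n} (hx : x ∈ K.C) :
    ∃ (i : ℕ) (ε : Vec n), (ε = 0 ∨ ε = allOne n) ∧ x = K.pow a i + ε ∧
      K.π x = K.π (K.pow a i) := by
  obtain ⟨i, k, rfl⟩ := hgen x hx
  rcases Kpow_allOne K k with h | h
  · refine ⟨i, 0, Or.inl rfl, ?_, ?_⟩
    · rw [h, Kmul_zero, add_zero]
    · rw [h, Kmul_zero]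
  · refine ⟨i, allOne n, Or.inr rfl, ?_, ?_⟩
    · rw [h, Kmul_allOne]
    · rw [h, Kmul_allOne, Kpi_add_allOne K (Kpow_mem K ha i)]

lemma permAct_eps {σ : Equiv.Perm (Fin n)} {ε : Vec n} (hε : ε = 0 ∨ ε = allOne n) :
    permAct σ ε = ε := by
  rcases hε with rfl | rfl
  · exact permAct_zero σ
  · exact permAct_allOne σ

lemma Kcomm {a : Vec n} (ha : a ∈ K.C)
    (hgen : ∀ x ∈ K.C, ∃ i k : ℕ, x = K.mul (K.pow a i) (K.pow (allOne n) k)) :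
    ∀ x ∈ K.C, ∀ y ∈ K.C, K.mul x y = K.mul y x := by
  intro x hx y hy
  obtain ⟨i, ε, hε, hxe, hπx⟩ := Kcanon K ha hgen hx
  obtain ⟨j, δ, hδ, hye, hπy⟩ := Kcanon K ha hgen hy
  have key : K.pow a i + permAct (K.π (K.pow a i)) (K.pow a j)
      = K.pow a j + permAct (K.π (K.pow a j)) (K.pow a i) := by
    show K.mul (K.pow a i) (K.pow a j) = K.mul (K.pow a j) (K.pow a i)
    rw [← Kpow_add K ha, ← Kpow_add K ha, Nat.add_comm]
  rw [HFPCode.mul, HFPCode.mul, hπx, hπy, hxe, hye, permAct_add, permAct_add,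
    permAct_eps hδ, permAct_eps hε]
  calc K.pow a i + ε + (permAct (K.π (K.pow a i)) (K.pow a j) + δ)
      = (K.pow a i + permAct (K.π (K.pow a i)) (K.pow a j)) + (ε + δ) := by abel
    _ = (K.pow a j + permAct (K.π (K.pow a j)) (K.pow a i)) + (ε + δ) := by rw [key]
    _ = K.pow a j + δ + (permAct (K.π (K.pow a j)) (K.pow a i) + ε) := by abel

end GroupFacts

section KernelFacts

lemma kerSet_of_closed {n : ℕ} {S : Set (Vec n)} {z : Vec n}
    (h : ∀ x ∈ S, z + x ∈ S) : z ∈ kerSet S := by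
  apply Set.eq_of_subset_of_subset
  · rintro w ⟨x, hx, rfl⟩; exact h x hx
  · intro w hw
    exact ⟨z + w, h w hw, by show z + (z + w) = w; rw [← add_assoc, vec_add_self, zero_add]⟩

lemma kerSet_closed {n : ℕ} {S : Set (Vec n)} {z : Vec n} (hz : z ∈ kerSet S)
    {x : Vec n} (hx : x ∈ S) : z + x ∈ S := by
  have : z + x ∈ (fun x => z + x) '' S := Set.mem_image_of_mem _ hx
  rwa [hz] at this

lemma kerSet_eq_pair {n : ℕ} (hn : 0 < n) (K : HFPCode n) (hker : kerDim K.C = 1) :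
    kerSet K.C = {0, allOne n} := by
  apply Set.eq_of_subset_of_subset
  · intro z hz
    by_contra hcon
    simp only [Set.mem_insert_iff, Set.mem_singleton_iff, not_or] at hcon
    obtain ⟨hz0, hzu⟩ := hcon
    have hu : allOne n ∈ kerSet K.C := by
      apply kerSet_of_closed
      intro x hx
      rw [add_comm]
      exact K.add_allOne_mem x hx
    have hli : LinearIndependent (ZMod 2) ![z, allOne n] := by
      rw [linearIndependent_fin2]
      constructor
      · exact allOne_ne_zero hn
      · intro c hc
        rcases zmod2_cases c with rfl | rfl
        · rw [zero_smul] at hc; exact hz0 hc.symm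
        · rw [one_smul] at hc; exact hzu hc.symm
    have hcard : Module.finrank (ZMod 2)
        (Submodule.span (ZMod 2) (Set.range ![z, allOne n])) = 2 := by
      rw [finrank_span_eq_card hli, Fintype.card_fin]
    have hle : Submodule.span (ZMod 2) (Set.range ![z, allOne n])
        ≤ Submodule.span (ZMod 2) (kerSet K.C) := by
      apply Submodule.span_le.mpr
      rintro w ⟨i, rfl⟩
      fin_cases i
      · exact Submodule.subset_span hz
      · exact Submodule.subset_span hu
    have := Submodule.finrank_mono hle
    rw [hcard] at this
    rw [kerDim] at hker
    omega
  · rintro z (rfl | rfl)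
    · exact kerSet_of_closed (fun x hx => by rw [zero_add]; exact hx)
    · apply kerSet_of_closed
      intro x hx
      rw [add_comm]
      exact K.add_allOne_mem x hx

end KernelFacts

section Double2

variable {t : ℕ}

lemma Emb_inl_val (j : Fin (4*t)) : (Emb t (Sum.inl j) : Fin (8*t)).val = j.val := by
  simp [Emb]

lemma Emb_inr_val (j : Fin (4*t)) : (Emb t (Sum.inr j) : Fin (8*t)).val = 4*t + j.val := by
  simp [Emb]; omega

lemma G_eu : G t 0 (allOne (4*t)) = euVec8 t := by
  funext i
  obtain ⟨s, rfl⟩ := (Emb t).surjective i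
  cases s with
  | inl j =>
      rw [G_apply_inl]
      show (0 : ZMod 2) = if (Emb t (Sum.inl j)).val < 4*t then 0 else 1
      rw [Emb_inl_val, if_pos j.isLt]
  | inr j =>
      rw [G_apply_inr]
      show (1 : ZMod 2) = if (Emb t (Sum.inr j)).val < 4*t then 0 else 1
      rw [Emb_inr_val, if_neg (by omega)]

lemma G_ue : G t (allOne (4*t)) 0 = ueVec8 t := by
  funext i
  obtain ⟨s, rfl⟩ := (Emb t).surjective i
  cases s with
  | inl j =>
      rw [G_apply_inl]
      show (1 : ZMod 2) = if (Emb t (Sum.inl j)).val < 4*t then 1 else 0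
      rw [Emb_inl_val, if_pos j.isLt]
  | inr j =>
      rw [G_apply_inr]
      show (0 : ZMod 2) = if (Emb t (Sum.inr j)).val < 4*t then 1 else 0
      rw [Emb_inr_val, if_neg (by omega)]

lemma DHpow_a (ht : 0 < t) (H : HFPCode (4*t)) {a : Vec (4*t)} (ha : a ∈ H.C) (i : ℕ) :
    (DH t ht H).pow (G t a a) i = G t (H.pow a i) (H.pow a i) := by
  induction i with
  | zero => exact G_zero.symm
  | succ i ih =>
      rw [Kpow_succ, ih]
      show G t a a + permAct (DPi t H (G t a a)) (G t (H.pow a i) (H.pow a i)) = _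
      rw [mul_ee]
      rfl

lemma DPi_bh (ht : 0 < t) (H : HFPCode (4*t)) : DPi t H (G t 0 (allOne (4*t))) = Sw t := by
  have h : G t 0 (allOne (4*t)) = G t 0 ((0 : Vec (4*t)) + allOne (4*t)) := by rw [zero_add]
  rw [h, DPi_odd ht, H.π_zero, Dg_one, one_mul]

lemma DHpow_bh1 (ht : 0 < t) (H : HFPCode (4*t)) : (DH t ht H).pow (G t 0 (allOne (4*t))) 1 = G t 0 (allOne (4*t)) := by
  show (DH t ht H).mul _ 0 = _
  rw [Kmul_zero]

lemma DHpow_bh2 (ht : 0 < t) (H : HFPCode (4*t)) : (DH t ht H).pow (G t 0 (allOne (4*t))) 2 = allOne (8*t) := by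
  rw [Kpow_succ, DHpow_bh1 ht H]
  show G t 0 (allOne (4*t)) + permAct (DPi t H (G t 0 (allOne (4*t)))) (G t 0 (allOne (4*t))) = _
  rw [DPi_bh ht H, permAct_Sw, G_add, add_zero, zero_add, G_allOne]

lemma DHpow_bh3 (ht : 0 < t) (H : HFPCode (4*t)) : (DH t ht H).pow (G t 0 (allOne (4*t))) 3 = G t (allOne (4*t)) 0 := by
  rw [Kpow_succ, DHpow_bh2 ht H]
  show G t 0 (allOne (4*t)) + permAct (DPi t H (G t 0 (allOne (4*t)))) (allOne (8*t)) = _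
  rw [DPi_bh ht H, permAct_allOne, ← G_allOne, G_add, zero_add, vec_add_self]

lemma DHpow_bh4 (ht : 0 < t) (H : HFPCode (4*t)) : (DH t ht H).pow (G t 0 (allOne (4*t))) 4 = 0 := by
  rw [Kpow_succ, DHpow_bh3 ht H]
  show G t 0 (allOne (4*t)) + permAct (DPi t H (G t 0 (allOne (4*t)))) (G t (allOne (4*t)) 0) = _
  rw [DPi_bh ht H, permAct_Sw, vec_add_self]

lemma DHmul_even_eps (ht : 0 < t) (H : HFPCode (4*t)) {w p q : Vec (4*t)} (hp : p = 0 ∨ p = allOne (4*t))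
    (hq : q = 0 ∨ q = allOne (4*t)) :
    (DH t ht H).mul (G t w w) (G t p q) = G t (w + p) (w + q) := by
  show G t w w + permAct (DPi t H (G t w w)) (G t p q) = _
  rw [DPi_even, permAct_Dg, permAct_eps hp, permAct_eps hq, G_add]

lemma DHcomm (ht : 0 < t) (H : HFPCode (4*t)) {a : Vec (4*t)} (ha : a ∈ H.C)
    (hgen : ∀ x ∈ H.C, ∃ i k : ℕ, x = H.mul (H.pow a i) (H.pow (allOne (4*t)) k)) :
    ∀ z ∈ (DH t ht H).C, ∀ w ∈ (DH t ht H).C,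
      (DH t ht H).mul z w = (DH t ht H).mul w z := by
  have hc := Kcomm H ha hgen
  rintro z (⟨x, hx, rfl⟩ | ⟨x, hx, rfl⟩) w (⟨y, hy, rfl⟩ | ⟨y, hy, rfl⟩)
  · show G t x x + permAct (DPi t H (G t x x)) (G t y y)
      = G t y y + permAct (DPi t H (G t y y)) (G t x x)
    rw [mul_ee, mul_ee, hc x hx y hy]
  · show G t x x + permAct (DPi t H (G t x x)) (G t y (y + allOne (4*t)))
      = G t y (y + allOne (4*t)) + permAct (DPi t H (G t y (y + allOne (4*t)))) (G t x x)
    rw [mul_eo, mul_oe ht, hc x hx y hy]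
  · show G t x (x + allOne (4*t)) + permAct (DPi t H (G t x (x + allOne (4*t)))) (G t y y)
      = G t y y + permAct (DPi t H (G t y y)) (G t x (x + allOne (4*t)))
    rw [mul_oe ht, mul_eo, hc x hx y hy]
  · show G t x (x + allOne (4*t))
        + permAct (DPi t H (G t x (x + allOne (4*t)))) (G t y (y + allOne (4*t)))
      = G t y (y + allOne (4*t))
        + permAct (DPi t H (G t y (y + allOne (4*t)))) (G t x (x + allOne (4*t)))
    rw [mul_oo ht, mul_oo ht, hc x hx y hy]

lemma DC_even_mem (ht : 0 < t) (H : HFPCode (4*t)) {w : Vec (4*t)} (hw : G t w w ∈ DC t H) : w ∈ H.C := by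
  rcases hw with ⟨x, hx, hxe⟩ | ⟨x, hx, hxe⟩
  · obtain ⟨h1, h2⟩ := G_inj hxe
    rwa [h1] at hx
  · obtain ⟨h1, h2⟩ := G_inj hxe
    exact absurd (h2.trans h1.symm) (add_allOne_ne (by omega) x)

lemma DC_odd_mem (ht : 0 < t) (H : HFPCode (4*t)) {w : Vec (4*t)} (hw : G t w (w + allOne (4*t)) ∈ DC t H) : w ∈ H.C := by
  rcases hw with ⟨x, hx, hxe⟩ | ⟨x, hx, hxe⟩
  · obtain ⟨h1, h2⟩ := G_inj hxe
    exfalso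
    apply add_allOne_ne (show 0 < 4*t by omega) w
    rw [← h2, h1]
  · obtain ⟨h1, h2⟩ := G_inj hxe
    rwa [h1] at hx

lemma kerDC (ht : 0 < t) (H : HFPCode (4*t)) (hker : kerDim H.C = 1) :
    kerSet (DC t H)
      = {0, allOne (8*t), G t 0 (allOne (4*t)), G t (allOne (4*t)) 0} := by
  have hKH : kerSet H.C = {0, allOne (4*t)} := kerSet_eq_pair (by omega) H hker
  apply Set.eq_of_subset_of_subset
  · intro z hz
    have hzD : z ∈ DC t H := by
      have := kerSet_closed hz (DH t ht H).zero_mem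
      rwa [add_zero] at this
    rcases hzD with ⟨y, hy, rfl⟩ | ⟨y, hy, rfl⟩
    · have hyk : y ∈ kerSet H.C := by
        apply kerSet_of_closed
        intro x hx
        have h2 : G t y y + G t x x ∈ DC t H := kerSet_closed hz (Or.inl ⟨x, hx, rfl⟩)
        rw [G_add] at h2
        exact DC_even_mem ht H h2
      rw [hKH] at hyk
      rcases hyk with rfl | rfl
      · left; exact G_zero
      · right; left; exact G_allOne
    · have hyk : y ∈ kerSet H.C := by
        apply kerSet_of_closed
        intro x hx
        have h2 : G t y (y + allOne (4*t)) + G t x x ∈ DC t H :=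
          kerSet_closed hz (Or.inl ⟨x, hx, rfl⟩)
        rw [G_add] at h2
        have e : y + allOne (4*t) + x = (y + x) + allOne (4*t) := by abel
        rw [e] at h2
        exact DC_odd_mem ht H h2
      rw [hKH] at hyk
      rcases hyk with rfl | rfl
      · right; right; left
        show G t 0 ((0 : Vec (4*t)) + allOne (4*t)) = G t 0 (allOne (4*t))
        rw [zero_add]
      · right; right; right
        show G t (allOne (4*t)) (allOne (4*t) + allOne (4*t)) = G t (allOne (4*t)) 0
        rw [vec_add_self]
  · rintro z (rfl | rfl | rfl | rfl)
    · exact kerSet_of_closed (fun x hx => by rw [zero_add]; exact hx)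
    · apply kerSet_of_closed
      intro x hx
      rw [add_comm]
      exact (DH t ht H).add_allOne_mem x hx
    · apply kerSet_of_closed
      rintro x (⟨w, hw, rfl⟩ | ⟨w, hw, rfl⟩)
      · refine Or.inr ⟨w, hw, ?_⟩
        show G t w (w + allOne (4*t)) = G t 0 (allOne (4*t)) + G t w w
        rw [G_add, zero_add, add_comm (allOne (4*t)) w]
      · refine Or.inl ⟨w, hw, ?_⟩
        show G t w w = G t 0 (allOne (4*t)) + G t w (w + allOne (4*t))
        rw [G_add, zero_add]
        have e : allOne (4*t) + (w + allOne (4*t)) = w := by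
          rw [add_comm w, ← add_assoc, vec_add_self, zero_add]
        rw [e]
    · apply kerSet_of_closed
      rintro x (⟨w, hw, rfl⟩ | ⟨w, hw, rfl⟩)
      · refine Or.inr ⟨w + allOne (4*t), H.add_allOne_mem w hw, ?_⟩
        show G t (w + allOne (4*t)) (w + allOne (4*t) + allOne (4*t))
          = G t (allOne (4*t)) 0 + G t w w
        rw [vec_add_add_cancel, G_add, zero_add, add_comm (allOne (4*t)) w]
      · refine Or.inl ⟨w + allOne (4*t), H.add_allOne_mem w hw, ?_⟩
        show G t (w + allOne (4*t)) (w + allOne (4*t))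
          = G t (allOne (4*t)) 0 + G t w (w + allOne (4*t))
        rw [G_add, zero_add, add_comm (allOne (4*t)) w]

end Double2

end Doubling

/-- From an HFP(4t,2_u)-code (circulant Hadamard code) of length `4t` with kernel of
dimension `1`, one obtains an HFP(4t,4_u)-code of length `8t` whose kernel is exactly
`{e, u, (e_{4t},u_{4t}), (u_{4t},e_{4t})}`. -/
theorem doubling_circulant (t : ℕ) (H : HFPCode (4 * t)) (a : Vec (4 * t))
    (ha : a ∈ H.C)
    (haord : H.pow a (4 * t) = 0 ∧ ∀ j : ℕ, 0 < j → j < 4 * t → H.pow a j ≠ 0)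
    (hdir : ∀ i k : ℕ, i < 4 * t → k < 2 →
      H.mul (H.pow a i) (H.pow (allOne (4 * t)) k) = 0 → i = 0 ∧ k = 0)
    (hgen : ∀ x ∈ H.C, ∃ i k : ℕ, x = H.mul (H.pow a i) (H.pow (allOne (4 * t)) k))
    (hker : kerDim H.C = 1) :
    ∃ (Hh : HFPCode (8 * t)) (ah bh : Vec (8 * t)),
      ah ∈ Hh.C ∧ bh ∈ Hh.C ∧
      (∀ x ∈ Hh.C, ∀ y ∈ Hh.C, Hh.mul x y = Hh.mul y x) ∧
      Hh.pow ah (4 * t) = 0 ∧ (∀ j : ℕ, 0 < j → j < 4 * t → Hh.pow ah j ≠ 0) ∧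
      Hh.pow bh 4 = 0 ∧ (∀ j : ℕ, 0 < j → j < 4 → Hh.pow bh j ≠ 0) ∧
      Hh.pow bh 2 = allOne (8 * t) ∧
      (∀ i j : ℕ, i < 4 * t → j < 4 →
        Hh.mul (Hh.pow ah i) (Hh.pow bh j) = 0 → i = 0 ∧ j = 0) ∧
      (∀ x ∈ Hh.C, ∃ i j : ℕ, x = Hh.mul (Hh.pow ah i) (Hh.pow bh j)) ∧
      kerSet Hh.C = {0, allOne (8 * t), euVec8 t, ueVec8 t} := by
  rcases Nat.eq_zero_or_pos t with rfl | ht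
  · exfalso
    have h1 : 0 < H.C.ncard := (Set.ncard_pos (Set.toFinite _)).mpr ⟨0, H.zero_mem⟩
    have h2 := H.card_eq
    omega
  · refine ⟨Doubling.DH t ht H, Doubling.G t a a, Doubling.G t 0 (allOne (4*t)),
      Or.inl ⟨a, ha, rfl⟩, Or.inr ⟨0, H.zero_mem, ?_⟩,
      Doubling.DHcomm ht H ha hgen, ?_, ?_, Doubling.DHpow_bh4 ht H, ?_,
      Doubling.DHpow_bh2 ht H, ?_, ?_, ?_⟩
    · show Doubling.G t 0 ((0 : Vec (4*t)) + allOne (4*t)) = Doubling.G t 0 (allOne (4*t))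
      rw [zero_add]
    · rw [Doubling.DHpow_a ht H ha, haord.1]
      exact Doubling.G_zero
    · intro j hj1 hj2 h
      rw [Doubling.DHpow_a ht H ha] at h
      exact haord.2 j hj1 hj2 (Doubling.G_inj (h.trans Doubling.G_zero.symm)).1
    · intro j hj1 hj2
      interval_cases j
      · rw [Doubling.DHpow_bh1 ht H]
        intro h
        exact Doubling.allOne_ne_zero (show 0 < 4*t by omega)
          (Doubling.G_inj (h.trans Doubling.G_zero.symm)).2
      · rw [Doubling.DHpow_bh2 ht H]
        exact Doubling.allOne_ne_zero (by omega)
      · rw [Doubling.DHpow_bh3 ht H]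
        intro h
        exact Doubling.allOne_ne_zero (show 0 < 4*t by omega)
          (Doubling.G_inj (h.trans Doubling.G_zero.symm)).1
    · intro i j hi hj h
      rw [Doubling.DHpow_a ht H ha] at h
      interval_cases j
      · have h0 : (Doubling.DH t ht H).pow (Doubling.G t 0 (allOne (4*t))) 0
            = (0 : Vec (8*t)) := rfl
        rw [h0, Doubling.Kmul_zero] at h
        have hw := (Doubling.G_inj (h.trans Doubling.G_zero.symm)).1
        rcases Nat.eq_zero_or_pos i with rfl | hip
        · exact ⟨rfl, rfl⟩
        · exact absurd hw (haord.2 i hip hi)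
      · rw [Doubling.DHpow_bh1 ht H,
          Doubling.DHmul_even_eps ht H (Or.inl rfl) (Or.inr rfl)] at h
        obtain ⟨h1, h2⟩ := Doubling.G_inj (h.trans Doubling.G_zero.symm)
        rw [add_zero] at h1
        rw [h1, zero_add] at h2
        exact absurd h2 (Doubling.allOne_ne_zero (by omega))
      · rw [Doubling.DHpow_bh2 ht H, ← Doubling.G_allOne,
          Doubling.DHmul_even_eps ht H (Or.inr rfl) (Or.inr rfl)] at h
        obtain ⟨h1, -⟩ := Doubling.G_inj (h.trans Doubling.G_zero.symm)
        have hmm : H.mul (H.pow a i) (H.pow (allOne (4*t)) 1) = 0 := by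
          rw [Doubling.Kpow_allOne_one, Doubling.Kmul_allOne]
          exact h1
        exact absurd (hdir i 1 hi (by omega) hmm).2 one_ne_zero
      · rw [Doubling.DHpow_bh3 ht H,
          Doubling.DHmul_even_eps ht H (Or.inr rfl) (Or.inl rfl)] at h
        obtain ⟨h1, h2⟩ := Doubling.G_inj (h.trans Doubling.G_zero.symm)
        rw [add_zero] at h2
        rw [h2, zero_add] at h1
        exact absurd h1 (Doubling.allOne_ne_zero (by omega))
    · rintro z (⟨x, hx, rfl⟩ | ⟨x, hx, rfl⟩)
      · obtain ⟨i, ε, hε, hxe, -⟩ := Doubling.Kcanon H ha hgen hx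
        rcases hε with rfl | rfl
        · refine ⟨i, 0, ?_⟩
          have hx0 : x = H.pow a i := by rw [hxe, add_zero]
          have h0 : (Doubling.DH t ht H).pow (Doubling.G t 0 (allOne (4*t))) 0
              = (0 : Vec (8*t)) := rfl
          show Doubling.G t x x = _
          rw [h0, Doubling.Kmul_zero, Doubling.DHpow_a ht H ha, hx0]
        · refine ⟨i, 2, ?_⟩
          show Doubling.G t x x = _
          rw [Doubling.DHpow_bh2 ht H, ← Doubling.G_allOne, Doubling.DHpow_a ht H ha,
            Doubling.DHmul_even_eps ht H (Or.inr rfl) (Or.inr rfl), hxe]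
      · obtain ⟨i, ε, hε, hxe, -⟩ := Doubling.Kcanon H ha hgen hx
        rcases hε with rfl | rfl
        · refine ⟨i, 1, ?_⟩
          have hx0 : x = H.pow a i := by rw [hxe, add_zero]
          show Doubling.G t x (x + allOne (4*t)) = _
          rw [Doubling.DHpow_bh1 ht H, Doubling.DHpow_a ht H ha,
            Doubling.DHmul_even_eps ht H (Or.inl rfl) (Or.inr rfl), add_zero, hx0]
        · refine ⟨i, 3, ?_⟩
          show Doubling.G t x (x + allOne (4*t)) = _
          rw [Doubling.DHpow_bh3 ht H, Doubling.DHpow_a ht H ha,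
            Doubling.DHmul_even_eps ht H (Or.inr rfl) (Or.inl rfl), add_zero, hxe,
            Doubling.vec_add_add_cancel]
    · show kerSet (Doubling.DC t H) = _
      rw [Doubling.kerDC ht H hker, Doubling.G_eu, Doubling.G_ue]
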